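/- Let Γ ⊢ Σ₀, (s₁)[Σ₁], …, (sₙ)[Σₙ] be a saturated colored nested sequent, and let M = (Π, σ, δ) be the extracted model with Π = {π₀, …, πₙ}, σ(*) = Π, σ(s) for s ≠ * the least set containing πᵢ for each 1 ≤ i ≤ n with sᵢ = s and closed under πⱼ ∈ σ(s') and s' ≼*_Γ s implying πⱼ ∈ σ(s), and δ(p) = {πᵢ : p° ∉ Σᵢ}. Then for every 0 ≤ i ≤ n and every colored formula ψ° ∈ Σᵢ whose top label is active, M, πᵢ ⊭ ψ (where ψ is the underlying uncolored formula). -/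

import Mathlib

/-- Formulas of propositional standpoint logic in negation normal form,
over propositional variables `P` and standpoint symbols `S`. -/
inductive Fml (P S : Type) : Type
  | atom  : P → Fml P S
  | natom : P → Fml P S
  | or    : Fml P S → Fml P S → Fml P S
  | and   : Fml P S → Fml P S → Fml P S
  | box   : S → Fml P S → Fml P S
  | dia   : S → Fml P S → Fml P S

/-- A standpoint model over the vocabulary `(P, S)` with distinguished
universal standpoint `star`, whose set of precisifications is `W`. -/
structure Model (P S : Type) (star : S) (W : Type) : Type where
  nonempty : Nonempty W
  sig : S → Set W
  val : P → Set W
  sig_nonempty : ∀ s, (sig s).Nonempty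
  sig_star : sig star = Set.univ

/-- Satisfaction of a formula at a precisification of a standpoint model. -/
def sat {P S W : Type} {star : S} (M : Model P S star W) : W → Fml P S → Prop
  | w, .atom p  => w ∈ M.val p
  | w, .natom p => w ∉ M.val p
  | w, .or φ ψ  => sat M w φ ∨ sat M w ψ
  | w, .and φ ψ => sat M w φ ∧ sat M w ψ
  | _, .box s φ => ∀ v ∈ M.sig s, sat M v φ
  | _, .dia s φ => ∃ v ∈ M.sig s, sat M v φ

/-- `M` satisfies every sharpening statement `s ≼ s'` in `Γ`
(this does not depend on the precisification). -/
def satSharp {P S W : Type} {star : S} (M : Model P S star W) (Γ : Set (S × S)) : Prop :=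
  ∀ q ∈ Γ, M.sig q.1 ⊆ M.sig q.2

/-- `SpRel star Γ s s'` is `s ≼*_Γ s'`: the least reflexive-transitive relation
containing all pairs of `Γ` and relating every standpoint to `star`. -/
inductive SpRel {S : Type} (star : S) (Γ : Set (S × S)) : S → S → Prop
  | base {s s'} : (s, s') ∈ Γ → SpRel star Γ s s'
  | toStar (s) : SpRel star Γ s star
  | refl (s) : SpRel star Γ s s
  | trans {s t u} : SpRel star Γ s t → SpRel star Γ t u → SpRel star Γ s u

/-- Satisfaction at `w` of the formula interpretation
`ι(Γ ⊢ Σ₀, (s₁)[Σ₁], …, (sₙ)[Σₙ]) = ⋀Γ → ⋁Σ₀ ∨ ⋁ᵢ ◻_{sᵢ}(⋁Σᵢ)`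
of the nested sequent with antecedent `Γ`, root component `root = Σ₀`
and nestings `nest = [(s₁, Σ₁), …, (sₙ, Σₙ)]`. -/
def satSeq {P S W : Type} {star : S} (M : Model P S star W) (w : W)
    (Γ : Set (S × S)) (root : Multiset (Fml P S))
    (nest : List (S × Multiset (Fml P S))) : Prop :=
  satSharp M Γ →
    (∃ φ ∈ root, sat M w φ) ∨ ∃ e ∈ nest, ∀ v ∈ M.sig e.1, ∃ φ ∈ e.2, sat M v φ

/-- Validity of a nested sequent: its formula interpretation holds at every
precisification of every standpoint model. -/
def ValidSeq {P S : Type} (star : S) (Γ : Set (S × S))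
    (root : Multiset (Fml P S)) (nest : List (S × Multiset (Fml P S))) : Prop :=
  ∀ (W : Type) (M : Model P S star W) (w : W), satSeq M w Γ root nest

/-- Colored formulas: each subformula occurrence carries a label,
`true` for active (∘) and `false` for inactive (•). -/
inductive CFml (P S : Type) : Type
  | atom  : Bool → P → CFml P S
  | natom : Bool → P → CFml P S
  | or    : Bool → CFml P S → CFml P S → CFml P S
  | and   : Bool → CFml P S → CFml P S → CFml P S
  | box   : Bool → S → CFml P S → CFml P S
  | dia   : Bool → S → CFml P S → CFml P S

/-- The underlying uncolored formula of a colored formula. -/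
def CFml.toFml {P S : Type} : CFml P S → Fml P S
  | .atom _ p   => .atom p
  | .natom _ p  => .natom p
  | .or _ φ ψ   => .or φ.toFml ψ.toFml
  | .and _ φ ψ  => .and φ.toFml ψ.toFml
  | .box _ s φ  => .box s φ.toFml
  | .dia _ s φ  => .dia s φ.toFml

/-- The top label of a colored formula. -/
def CFml.label {P S : Type} : CFml P S → Bool
  | .atom b _  => b
  | .natom b _ => b
  | .or b _ _  => b
  | .and b _ _ => b
  | .box b _ _ => b
  | .dia b _ _ => b

/-- `ψ°`: the colored formula `ψ` with its top label set to active. -/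
def CFml.act {P S : Type} : CFml P S → CFml P S
  | .atom _ p   => .atom true p
  | .natom _ p  => .natom true p
  | .or _ φ ψ   => .or true φ ψ
  | .and _ φ ψ  => .and true φ ψ
  | .box _ s φ  => .box true s φ
  | .dia _ s φ  => .dia true s φ

/-- The `i`-th component of the colored nested sequent with root component
`root = Σ₀` and nestings `nest = [(s₁, Σ₁), …, (sₙ, Σₙ)]`
(`comp root nest 0 = Σ₀` and `comp root nest (j+1) = Σ_{j+1}`). -/
def comp {P S : Type} (root : Multiset (CFml P S))
    (nest : List (S × Multiset (CFml P S))) : ℕ → Multiset (CFml P S)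
  | 0 => root
  | i + 1 => ((nest[i]?).map Prod.snd).getD ∅

/-- Saturation conditions for a colored nested sequent
`Γ ⊢ Σ₀, (s₁)[Σ₁], …, (sₙ)[Σₙ]`. -/
structure Saturated {P S : Type} (star : S) (Γ : Set (S × S))
    (root : Multiset (CFml P S)) (nest : List (S × Multiset (CFml P S))) :
    Prop where
  /-- `(id)`: no component contains both `p°` and `¬p°`. -/
  idSat : ∀ i ≤ nest.length, ∀ p : P,
    CFml.atom true p ∈ comp root nest i → CFml.natom true p ∉ comp root nest i
  /-- `(∨)`: if `(φ ∨ ψ)° ∈ Σᵢ` then `φ° ∈ Σᵢ` and `ψ° ∈ Σᵢ`. -/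
  orSat : ∀ i ≤ nest.length, ∀ φ ψ : CFml P S,
    CFml.or true φ ψ ∈ comp root nest i →
      φ.act ∈ comp root nest i ∧ ψ.act ∈ comp root nest i
  /-- `(∧)`: if `(φ ∧ ψ)° ∈ Σᵢ` then `φ° ∈ Σᵢ` or `ψ° ∈ Σᵢ`. -/
  andSat : ∀ i ≤ nest.length, ∀ φ ψ : CFml P S,
    CFml.and true φ ψ ∈ comp root nest i →
      φ.act ∈ comp root nest i ∨ ψ.act ∈ comp root nest i
  /-- `(◇ₛ)`: if `(◇ₛφ)° ∈ Σᵢ` and `s' ≼*_Γ s` then `φ° ∈ Σⱼ` for every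
  nesting `j` labeled `s'`. -/
  diaSat : ∀ i ≤ nest.length, ∀ (s : S) (φ : CFml P S),
    CFml.dia true s φ ∈ comp root nest i →
      ∀ s', SpRel star Γ s' s →
        ∀ (j : ℕ) (e : S × Multiset (CFml P S)),
          nest[j]? = some e → e.1 = s' → φ.act ∈ e.2
  /-- `(◇*)`: if `(◇*φ)° ∈ Σᵢ` then `φ° ∈ Σ₀`. -/
  diaStarSat : ∀ i ≤ nest.length, ∀ φ : CFml P S,
    CFml.dia true star φ ∈ comp root nest i → φ.act ∈ root
  /-- `(◻ₛ)`: if `(◻ₛφ)° ∈ Σᵢ` then some nesting labeled `s` contains `φ°`. -/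
  boxSat : ∀ i ≤ nest.length, ∀ (s : S) (φ : CFml P S),
    CFml.box true s φ ∈ comp root nest i →
      ∃ (j : ℕ) (e : S × Multiset (CFml P S)),
        nest[j]? = some e ∧ e.1 = s ∧ φ.act ∈ e.2
  /-- `(nₛ)`: every standpoint labels some nesting. -/
  nSat : ∀ s : S, ∃ (j : ℕ) (e : S × Multiset (CFml P S)),
    nest[j]? = some e ∧ e.1 = s

/-- The auxiliary inductively defined part of the extracted interpretation of
standpoints: the least family containing `π_{j+1}` in `σ(s)` whenever the
`j`-th nesting is labeled `s`, and closed under `πⱼ ∈ σ(s')` and `s' ≼*_Γ s`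
implying `πⱼ ∈ σ(s)`. -/
inductive ExtSig {P S : Type} (star : S) (Γ : Set (S × S))
    (nest : List (S × Multiset (CFml P S))) : S → Fin (nest.length + 1) → Prop
  | base {j : ℕ} {e : S × Multiset (CFml P S)}
      (h : nest[j]? = some e) (hj : j + 1 < nest.length + 1) :
      ExtSig star Γ nest e.1 ⟨j + 1, hj⟩
  | up {s s' : S} {w : Fin (nest.length + 1)} :
      ExtSig star Γ nest s' w → SpRel star Γ s' s → ExtSig star Γ nest s w

/-- The extracted interpretation of standpoints: `σ(*) = Π`, and for
`s ≠ *`, `σ(s)` is the least set described by `ExtSig`. -/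
def extSig {P S : Type} (star : S) (Γ : Set (S × S))
    (nest : List (S × Multiset (CFml P S))) (s : S) :
    Set (Fin (nest.length + 1)) :=
  {w | s = star ∨ ExtSig star Γ nest s w}

/-- The extracted valuation: `δ(p) = {πᵢ : p° ∉ Σᵢ}`. -/
def extVal {P S : Type} (root : Multiset (CFml P S))
    (nest : List (S × Multiset (CFml P S))) (p : P) :
    Set (Fin (nest.length + 1)) :=
  {w | CFml.atom true p ∉ comp root nest w.val}

lemma CFml.act_of_label {P S : Type} (ψ : CFml P S) (h : ψ.label = true) : ψ.act = ψ := by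
  cases ψ <;> simp_all [CFml.label, CFml.act]

lemma extSig_elim {P S : Type} {star : S} {Γ : Set (S × S)}
    {nest : List (S × Multiset (CFml P S))} {s : S} {w : Fin (nest.length + 1)}
    (h : ExtSig star Γ nest s w) :
    ∃ (j : ℕ) (e : S × Multiset (CFml P S)),
      nest[j]? = some e ∧ w.val = j + 1 ∧ SpRel star Γ e.1 s := by
  induction h with
  | base h hj => exact ⟨_, _, h, rfl, SpRel.refl _⟩
  | up h1 h2 ih =>
    obtain ⟨j, e, h3, h4, h5⟩ := ih
    exact ⟨j, e, h3, h4, h5.trans h2⟩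

lemma key_lemma {P S : Type} (star : S) (Γ : Set (S × S))
    (root : Multiset (CFml P S)) (nest : List (S × Multiset (CFml P S)))
    (hsat : Saturated star Γ root nest)
    (M : Model P S star (Fin (nest.length + 1)))
    (hσ : M.sig = extSig star Γ nest)
    (hδ : M.val = extVal root nest) :
    ∀ ψ : CFml P S, ∀ i : Fin (nest.length + 1),
      ψ.act ∈ comp root nest i.val → ¬ sat M i (CFml.toFml ψ) := by
  intro ψ
  induction ψ with
  | atom b p =>
    intro i h hs
    simp only [CFml.toFml, sat] at hs
    rw [hδ] at hs
    exact hs h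
  | natom b p =>
    intro i h hs
    simp only [CFml.toFml, sat] at hs
    rw [hδ] at hs
    have hmem : CFml.atom true p ∈ comp root nest i.val := by
      by_contra hc; exact hs hc
    exact hsat.idSat i.val (Nat.lt_succ_iff.mp i.isLt) p hmem h
  | or b φ ψ ihφ ihψ =>
    intro i h hs
    simp only [CFml.toFml, sat] at hs
    obtain ⟨h1, h2⟩ := hsat.orSat i.val (Nat.lt_succ_iff.mp i.isLt) φ ψ h
    cases hs with
    | inl h' => exact ihφ i h1 h'
    | inr h' => exact ihψ i h2 h'
  | and b φ ψ ihφ ihψ =>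
    intro i h hs
    simp only [CFml.toFml, sat] at hs
    obtain ⟨h1, h2⟩ := hs
    cases hsat.andSat i.val (Nat.lt_succ_iff.mp i.isLt) φ ψ h with
    | inl h' => exact ihφ i h' h1
    | inr h' => exact ihψ i h' h2
  | box b s φ ihφ =>
    intro i h hs
    simp only [CFml.toFml, sat] at hs
    obtain ⟨j, e, h1, h2, h3⟩ := hsat.boxSat i.val (Nat.lt_succ_iff.mp i.isLt) s φ h
    have hj : j < nest.length := by
      by_contra hc
      rw [List.getElem?_eq_none (by omega)] at h1
      cases h1
    set v : Fin (nest.length + 1) := ⟨j + 1, by omega⟩ with hv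
    have hvsig : v ∈ M.sig s := by
      rw [hσ]
      exact Or.inr (h2 ▸ ExtSig.base h1 (by omega))
    have hmem : φ.act ∈ comp root nest v.val := by
      show φ.act ∈ comp root nest (j + 1)
      simp [comp, h1, h3]
    exact ihφ v hmem (hs v hvsig)
  | dia b s φ ihφ =>
    intro i h hs
    simp only [CFml.toFml, sat] at hs
    obtain ⟨v, hv, hvs⟩ := hs
    rw [hσ] at hv
    rcases hv with hst | hext
    · subst hst
      have hmem : φ.act ∈ comp root nest v.val := by
        rcases hk : v.val with _ | j
        · exact hsat.diaStarSat i.val (Nat.lt_succ_iff.mp i.isLt) φ h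
        · have hj : j < nest.length := by have := v.isLt; omega
          have he : nest[j]? = some nest[j] := List.getElem?_eq_getElem hj
          have := hsat.diaSat i.val (Nat.lt_succ_iff.mp i.isLt) s φ h
            nest[j].1 (SpRel.toStar _) j nest[j] he rfl
          simpa [comp, he] using this
      exact ihφ v hmem hvs
    · obtain ⟨j, e, h1, h2, h3⟩ := extSig_elim hext
      have hφ := hsat.diaSat i.val (Nat.lt_succ_iff.mp i.isLt) s φ h e.1 h3 j e h1 rfl
      have hmem : φ.act ∈ comp root nest v.val := by
        rw [h2]; simp [comp, h1, hφ]
      exact ihφ v hmem hvs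

/-- In the model extracted from a saturated colored nested sequent, every
active formula `ψ°` of a component `Σᵢ` is falsified at the corresponding
precisification `πᵢ`. -/
theorem stmt11 {P S : Type} [Finite S] (star : S) (Γ : Set (S × S))
    (root : Multiset (CFml P S)) (nest : List (S × Multiset (CFml P S)))
    (hsat : Saturated star Γ root nest)
    (M : Model P S star (Fin (nest.length + 1)))
    (hσ : M.sig = extSig star Γ nest)
    (hδ : M.val = extVal root nest) :
    ∀ i : Fin (nest.length + 1), ∀ ψ ∈ comp root nest i.val,
      CFml.label ψ = true → ¬ sat M i (CFml.toFml ψ) := by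
  intro i ψ hm hl
  exact key_lemma star Γ root nest hsat M hσ hδ ψ i
    (by rw [CFml.act_of_label ψ hl]; exact hm)
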